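/- arXiv:1906.11274 — 2 statements merged into one kernel-verified Lean document; each statement's English description precedes it below -/
import Mathlib

section
/- Let λ > 0 and p > 1. There exists C > 0 (depending on λ and p) such that for every continuously differentiable u : ℝ → ℂ which is odd (u(-x) = -u(x)), bounded, and vanishing at infinity, with sech(x/λ)·u and its derivative square-integrable, one has ∫_ℝ sech²(x/λ) |u(x)|^{p+1} dx ≤ C · ‖u‖_{L^∞(ℝ)}^{p-1} · ∫_ℝ |d/dx( sech(x/λ)·u(x) )|² dx. -/
open MeasureTheory Real Filter

private lemma sech_le_exp (t : ℝ) : 1 / Real.cosh t ≤ 2 * Real.exp (-t) := by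
  have h1 : Real.exp (-t) * Real.exp t = 1 := by rw [← Real.exp_add]; simp
  have h2 : 0 < Real.exp t := Real.exp_pos t
  have h3 : 0 < Real.exp (-t) := Real.exp_pos (-t)
  rw [Real.cosh_eq, div_le_iff₀ (by positivity)]
  nlinarith

private lemma cosh_le_exp_of_nonneg {t : ℝ} (ht : 0 ≤ t) : Real.cosh t ≤ Real.exp t := by
  have := Real.exp_le_exp.mpr (neg_le_self ht)
  rw [Real.cosh_eq]; linarith

private lemma pow_two_rpow (t r : ℝ) (ht : 0 ≤ t) : ((t ^ 2 : ℝ)) ^ r = t ^ (2 * r) := by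
  rw [← Real.rpow_natCast t 2, ← Real.rpow_mul ht]; norm_num


private lemma quad_bound {p alpha a s : ℝ} (hp : 1 < p) (ha : 0 < alpha)
    (ha0 : 0 ≤ a) (hs : 0 ≤ s) :
    (p + 1) * (a ^ p * s)
      ≤ (alpha / 2) * a ^ (p + 1) + ((p + 1) ^ 2 / (2 * alpha)) * (a ^ (p - 1) * s ^ 2) := by
  rcases eq_or_lt_of_le ha0 with h | h
  · rw [← h, Real.zero_rpow (by positivity : p ≠ 0),
      Real.zero_rpow (by positivity : p + 1 ≠ 0),
      Real.zero_rpow (by intro hc; nlinarith : p - 1 ≠ 0)]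
    simp
  · have hA : a ^ ((p + 1) / 2) * a ^ ((p + 1) / 2) = a ^ (p + 1) := by
      rw [← Real.rpow_add h]; ring_nf
    have hB : a ^ ((p - 1) / 2) * a ^ ((p - 1) / 2) = a ^ (p - 1) := by
      rw [← Real.rpow_add h]; ring_nf
    have hAB : a ^ ((p + 1) / 2) * a ^ ((p - 1) / 2) = a ^ p := by
      rw [← Real.rpow_add h]; ring_nf
    set A := a ^ ((p + 1) / 2) with hAdef
    set B := a ^ ((p - 1) / 2) with hBdef
    have hkey : (alpha / 2) * a ^ (p + 1) + ((p + 1) ^ 2 / (2 * alpha)) * (a ^ (p - 1) * s ^ 2)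
        - (p + 1) * (a ^ p * s) = (alpha * A - (p + 1) * (B * s)) ^ 2 / (2 * alpha) := by
      rw [← hA, ← hB, ← hAB]
      field_simp
      ring
    nlinarith [div_nonneg (sq_nonneg (alpha * A - (p + 1) * (B * s))) (by linarith : (0:ℝ) ≤ 2 * alpha)]


set_option maxHeartbeats 2000000

/-- Key nonlinear estimate: for odd bounded functions vanishing at infinity, the weighted
L^{p+1} norm is controlled by the sup norm and the derivative of sech(x/λ)·u. -/
theorem weighted_Lp_estimate_odd
    (lam p : ℝ) (hlam : 0 < lam) (hp : 1 < p) :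
    ∃ C > 0, ∀ u : ℝ → ℂ,
      ContDiff ℝ 1 u →
      (∀ x : ℝ, u (-x) = - u x) →
      BddAbove (Set.range fun x : ℝ => ‖u x‖) →
      Tendsto u (cocompact ℝ) (nhds 0) →
      Integrable (fun x : ℝ => ‖((1 / Real.cosh (x / lam) : ℝ) : ℂ) * u x‖ ^ 2) →
      Integrable (fun x : ℝ =>
        ‖deriv (fun y : ℝ => ((1 / Real.cosh (y / lam) : ℝ) : ℂ) * u y) x‖ ^ 2) →
      (∫ x : ℝ, (1 / Real.cosh (x / lam)) ^ 2 * ‖u x‖ ^ (p + 1))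
      ≤ C * (⨆ x : ℝ, ‖u x‖) ^ (p - 1)
          * ∫ x : ℝ, ‖deriv (fun y : ℝ => ((1 / Real.cosh (y / lam) : ℝ) : ℂ) * u y) x‖ ^ 2 := by
  have hp0 : (0:ℝ) < p - 1 := by linarith
  have hp1 : (0:ℝ) < p + 1 := by linarith
  set α : ℝ := (p - 1) / lam with hαdef
  have hα : 0 < α := div_pos hp0 hlam
  refine ⟨2 * (2 * (p + 1) * lam / (p - 1)) ^ 2 * 2 ^ (p - 1), by positivity, ?_⟩
  intro u hu hodd hbdd _hten hInt2 hIntD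
  set v : ℝ → ℂ := fun y : ℝ => ((1 / Real.cosh (y / lam) : ℝ) : ℂ) * u y with hvdef
  set M : ℝ := ⨆ x : ℝ, ‖u x‖ with hMdef
  have hM : ∀ x, ‖u x‖ ≤ M := fun x => le_ciSup hbdd x
  have hM0 : (0:ℝ) ≤ M := le_trans (norm_nonneg _) (hM 0)
  have hu0 : u 0 = 0 := by
    have h := hodd 0; rw [neg_zero] at h; linear_combination h / 2
  have hv0 : v 0 = 0 := by simp [hvdef, hu0]
  have hIv2 : Integrable (fun x => ‖v x‖ ^ 2) := hInt2
  have hIvD : Integrable (fun x => ‖deriv v x‖ ^ 2) := hIntD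
  -- regularity of v
  have hcoshpos : ∀ x : ℝ, 0 < Real.cosh (x / lam) := fun x => Real.cosh_pos (x := x / lam)
  have hvC1 : ContDiff ℝ 1 v := by
    have hcosh : ContDiff ℝ 1 (fun x : ℝ => Real.cosh (x / lam)) :=
      Real.contDiff_cosh.comp (contDiff_id.div_const lam)
    have hs : ContDiff ℝ 1 (fun x : ℝ => 1 / Real.cosh (x / lam)) :=
      contDiff_const.div hcosh fun x => (hcoshpos x).ne'
    exact (Complex.ofRealCLM.contDiff.comp hs).mul hu
  have hvd : ∀ x, HasDerivAt v (deriv v x) x :=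
    fun x => (hvC1.differentiable one_ne_zero x).hasDerivAt
  have hvcont : Continuous v := hvC1.continuous
  have hvdcont : Continuous (deriv v) := hvC1.continuous_deriv le_rfl
  -- norms
  have hnormv : ∀ x, ‖v x‖ = (1 / Real.cosh (x / lam)) * ‖u x‖ := by
    intro x
    rw [hvdef]
    rw [norm_mul, Complex.norm_real, Real.norm_eq_abs,
      abs_of_pos (by positivity : (0:ℝ) < 1 / Real.cosh (x / lam))]
  have hvle : ∀ x, ‖v x‖ ≤ M * (1 / Real.cosh (x / lam)) := by
    intro x
    rw [hnormv x, mul_comm (1 / Real.cosh (x / lam))]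
    exact mul_le_mul_of_nonneg_right (hM x) (by positivity)
  have hvexp : ∀ x, 0 ≤ x → ‖v x‖ ≤ 2 * M * Real.exp (-(x / lam)) := by
    intro x hx
    refine (hvle x).trans ?_
    have := sech_le_exp (x / lam)
    calc M * (1 / Real.cosh (x / lam)) ≤ M * (2 * Real.exp (-(x / lam))) :=
          mul_le_mul_of_nonneg_left this hM0
      _ = 2 * M * Real.exp (-(x / lam)) := by ring
  -- key exponential absorption
  have hkey : ∀ x : ℝ, 0 ≤ x →
      Real.exp (α * x) * ‖v x‖ ^ (p - 1) ≤ (2 * M) ^ (p - 1) := by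
    intro x hx
    have h1 : ‖v x‖ ^ (p - 1) ≤ (2 * M * Real.exp (-(x / lam))) ^ (p - 1) :=
      Real.rpow_le_rpow (norm_nonneg _) (hvexp x hx) hp0.le
    have h2 : (2 * M * Real.exp (-(x / lam))) ^ (p - 1)
        = (2 * M) ^ (p - 1) * Real.exp (-(x / lam) * (p - 1)) := by
      rw [Real.mul_rpow (by positivity) (Real.exp_pos _).le, ← Real.exp_mul]
    have h3 : Real.exp (α * x) * Real.exp (-(x / lam) * (p - 1)) = 1 := by
      rw [← Real.exp_add]
      have : α * x + -(x / lam) * (p - 1) = 0 := by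
        rw [hαdef]; ring
      rw [this, Real.exp_zero]
    calc Real.exp (α * x) * ‖v x‖ ^ (p - 1)
        ≤ Real.exp (α * x) * ((2 * M) ^ (p - 1) * Real.exp (-(x / lam) * (p - 1))) := by
          rw [h2] at h1
          exact mul_le_mul_of_nonneg_left h1 (Real.exp_pos _).le
      _ = (2 * M) ^ (p - 1) * (Real.exp (α * x) * Real.exp (-(x / lam) * (p - 1))) := by ring
      _ = (2 * M) ^ (p - 1) := by rw [h3, mul_one]
  -- global bound for the weight function
  have hkey2 : ∀ x : ℝ,
      Real.cosh (x / lam) ^ (p - 1) * ‖v x‖ ^ (p - 1) ≤ M ^ (p - 1) := by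
    intro x
    have h1 : ‖v x‖ ^ (p - 1) ≤ (M * (1 / Real.cosh (x / lam))) ^ (p - 1) :=
      Real.rpow_le_rpow (norm_nonneg _) (hvle x) hp0.le
    have h2 : (M * (1 / Real.cosh (x / lam))) ^ (p - 1)
        = M ^ (p - 1) * (1 / Real.cosh (x / lam)) ^ (p - 1) :=
      Real.mul_rpow hM0 (by positivity)
    have h3 : Real.cosh (x / lam) ^ (p - 1) * (1 / Real.cosh (x / lam)) ^ (p - 1) = 1 := by
      rw [← Real.mul_rpow (Real.cosh_pos (x / lam)).le (by positivity),
        mul_one_div_cancel (Real.cosh_pos (x / lam)).ne', Real.one_rpow]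
    calc Real.cosh (x / lam) ^ (p - 1) * ‖v x‖ ^ (p - 1)
        ≤ Real.cosh (x / lam) ^ (p - 1) * (M ^ (p - 1) * (1 / Real.cosh (x / lam)) ^ (p - 1)) := by
          rw [h2] at h1
          exact mul_le_mul_of_nonneg_left h1 (by positivity)
      _ = M ^ (p - 1) * (Real.cosh (x / lam) ^ (p - 1) * (1 / Real.cosh (x / lam)) ^ (p - 1)) := by
          ring
      _ = M ^ (p - 1) := by rw [h3, mul_one]
  -- the function phi and its derivative
  set q : ℝ := (p + 1) / 2 with hqdef
  have hq1 : (1:ℝ) ≤ q := by rw [hqdef]; linarith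
  set n' : ℝ → ℝ := fun x => 2 * (inner ℝ (v x) (deriv v x) : ℝ) with hn'def
  have hnd : ∀ x, HasDerivAt (fun y => ‖v y‖ ^ 2) (n' x) x := fun x => (hvd x).norm_sq
  have hn'le : ∀ x, |n' x| ≤ 2 * (‖v x‖ * ‖deriv v x‖) := by
    intro x
    rw [hn'def, abs_mul, abs_two]
    exact mul_le_mul_of_nonneg_left (abs_real_inner_le_norm _ _) (by norm_num)
  have hn'cont : Continuous n' :=
    continuous_const.mul (hvcont.inner hvdcont)
  set φ : ℝ → ℝ := fun x => (‖v x‖ ^ 2) ^ q with hφdef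
  set φ' : ℝ → ℝ := fun x => q * (‖v x‖ ^ 2) ^ (q - 1) * n' x with hφ'def
  have hφd : ∀ x, HasDerivAt φ (φ' x) x := by
    intro x
    have h1 : HasDerivAt (fun t : ℝ => t ^ q) (q * (‖v x‖ ^ 2) ^ (q - 1)) (‖v x‖ ^ 2) :=
      Real.hasDerivAt_rpow_const (Or.inr hq1)
    exact h1.comp x (hnd x)
  have hφnonneg : ∀ x, 0 ≤ φ x := fun x => Real.rpow_nonneg (by positivity) q
  have hφrpow : ∀ x, φ x = ‖v x‖ ^ (p + 1) := by
    intro x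
    rw [hφdef]
    show ((‖v x‖ ^ 2 : ℝ)) ^ q = _
    rw [pow_two_rpow _ _ (norm_nonneg _)]
    congr 1
    rw [hqdef]; ring
  have hsplit : ∀ x, φ x = ‖v x‖ ^ (p - 1) * ‖v x‖ ^ 2 := by
    intro x
    rw [hφrpow x, ← Real.rpow_natCast ‖v x‖ 2,
      ← Real.rpow_add' (norm_nonneg _) (by push_cast; intro h; nlinarith)]
    push_cast
    congr 1
    ring
  have hφ'le : ∀ x, |φ' x| ≤ (p + 1) * (‖v x‖ ^ p * ‖deriv v x‖) := by
    intro x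
    have h1 : ((‖v x‖ ^ 2 : ℝ)) ^ (q - 1) = ‖v x‖ ^ (p - 1) := by
      rw [pow_two_rpow _ _ (norm_nonneg _)]
      congr 1
      rw [hqdef]; ring
    have h2 : ‖v x‖ ^ (p - 1) * ‖v x‖ = ‖v x‖ ^ p := by
      nth_rewrite 2 [← Real.rpow_one ‖v x‖]
      rw [← Real.rpow_add' (norm_nonneg _) (by intro h; nlinarith)]
      norm_num
    have h3 : 0 ≤ ‖v x‖ ^ (p - 1) := Real.rpow_nonneg (norm_nonneg _) _
    calc |φ' x| = q * ((‖v x‖ ^ 2 : ℝ)) ^ (q - 1) * |n' x| := by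
          rw [hφ'def, abs_mul]
          congr 1
          rw [abs_of_nonneg (by positivity)]
      _ ≤ q * ‖v x‖ ^ (p - 1) * (2 * (‖v x‖ * ‖deriv v x‖)) := by
          rw [h1]
          exact mul_le_mul_of_nonneg_left (hn'le x) (by positivity)
      _ = (2 * q) * (‖v x‖ ^ (p - 1) * ‖v x‖ * ‖deriv v x‖) := by ring
      _ = (p + 1) * (‖v x‖ ^ p * ‖deriv v x‖) := by
          rw [h2, hqdef]; ring
  have hφcont : Continuous φ := by
    apply Continuous.rpow_const
    · exact (hvcont.norm).pow 2
    · intro x; right; positivity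
  have hφ'cont : Continuous φ' := by
    apply Continuous.mul _ hn'cont
    apply Continuous.mul continuous_const
    apply Continuous.rpow_const ((hvcont.norm).pow 2)
    intro x; right
    rw [hqdef]; linarith
  -- continuity of exp factor
  have hecont : Continuous fun x : ℝ => Real.exp (α * x) :=
    Real.continuous_exp.comp (continuous_const.mul continuous_id)
  have hepos : ∀ x : ℝ, 0 < Real.exp (α * x) := fun x => Real.exp_pos _
  -- integrability of exp * φ on (0, ∞)
  have hIφ : IntegrableOn (fun x => Real.exp (α * x) * φ x) (Set.Ioi 0) := by
    apply Integrable.mono' ((hIv2.const_mul ((2 * M) ^ (p - 1))).restrict)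
    · exact (hecont.mul hφcont).aestronglyMeasurable
    · rw [ae_restrict_iff' measurableSet_Ioi]
      filter_upwards with x hx
      have hx0 : (0:ℝ) ≤ x := le_of_lt hx
      have h0 : (0:ℝ) ≤ Real.exp (α * x) * φ x := by positivity
      rw [Real.norm_eq_abs, abs_of_nonneg h0, hsplit x]
      calc Real.exp (α * x) * (‖v x‖ ^ (p - 1) * ‖v x‖ ^ 2)
          = (Real.exp (α * x) * ‖v x‖ ^ (p - 1)) * ‖v x‖ ^ 2 := by ring
        _ ≤ (2 * M) ^ (p - 1) * ‖v x‖ ^ 2 :=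
            mul_le_mul_of_nonneg_right (hkey x hx0) (by positivity)
  -- pointwise splitting of ‖v‖^p
  have hpsplit : ∀ x, ‖v x‖ ^ p = ‖v x‖ ^ (p - 1) * ‖v x‖ := by
    intro x
    nth_rewrite 3 [← Real.rpow_one ‖v x‖]
    rw [← Real.rpow_add' (norm_nonneg _) (by intro h; nlinarith)]
    norm_num
  -- integrability of exp * φ' on (0, ∞)
  have hIφ' : IntegrableOn (fun x => Real.exp (α * x) * φ' x) (Set.Ioi 0) := by
    apply Integrable.mono'
      (((hIv2.add hIvD).const_mul ((p + 1) * (2 * M) ^ (p - 1))).restrict)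
    · exact (hecont.mul hφ'cont).aestronglyMeasurable
    · rw [ae_restrict_iff' measurableSet_Ioi]
      filter_upwards with x hx
      have hx0 : (0:ℝ) ≤ x := le_of_lt hx
      have hab : ‖v x‖ * ‖deriv v x‖ ≤ ‖v x‖ ^ 2 + ‖deriv v x‖ ^ 2 := by
        nlinarith [sq_nonneg (‖v x‖ - ‖deriv v x‖), sq_nonneg (‖v x‖ + ‖deriv v x‖)]
      have h2M : (0:ℝ) ≤ (2 * M) ^ (p - 1) := Real.rpow_nonneg (by positivity) _
      calc ‖Real.exp (α * x) * φ' x‖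
          = Real.exp (α * x) * |φ' x| := by
            rw [norm_mul, Real.norm_eq_abs, Real.norm_eq_abs, abs_of_pos (hepos x)]
        _ ≤ Real.exp (α * x) * ((p + 1) * (‖v x‖ ^ p * ‖deriv v x‖)) :=
            mul_le_mul_of_nonneg_left (hφ'le x) (hepos x).le
        _ = (p + 1) * ((Real.exp (α * x) * ‖v x‖ ^ (p - 1)) * (‖v x‖ * ‖deriv v x‖)) := by
            rw [hpsplit x]; ring
        _ ≤ (p + 1) * ((2 * M) ^ (p - 1) * (‖v x‖ * ‖deriv v x‖)) := by
            apply mul_le_mul_of_nonneg_left _ (by positivity : (0:ℝ) ≤ p + 1)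
            exact mul_le_mul_of_nonneg_right (hkey x hx0) (by positivity)
        _ ≤ (p + 1) * ((2 * M) ^ (p - 1) * (‖v x‖ ^ 2 + ‖deriv v x‖ ^ 2)) := by
            apply mul_le_mul_of_nonneg_left _ (by positivity : (0:ℝ) ≤ p + 1)
            exact mul_le_mul_of_nonneg_left hab h2M
        _ = (p + 1) * (2 * M) ^ (p - 1) * (‖v x‖ ^ 2 + ‖deriv v x‖ ^ 2) := by ring
  -- the function G = exp(αx) φ(x) and its derivative
  set G : ℝ → ℝ := fun x => Real.exp (α * x) * φ x with hGdef
  set gd : ℝ → ℝ := fun x => α * (Real.exp (α * x) * φ x) + Real.exp (α * x) * φ' x with hgddef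
  have hecd : ∀ x : ℝ, HasDerivAt (fun y : ℝ => Real.exp (α * y)) (α * Real.exp (α * x)) x := by
    intro x
    have h : HasDerivAt (fun y : ℝ => Real.exp (α * y)) (Real.exp (α * x) * (α * 1)) x :=
      (Real.hasDerivAt_exp (α * x)).comp x ((hasDerivAt_id x).const_mul α)
    convert h using 1
    ring
  have hGd : ∀ x, HasDerivAt G (gd x) x := by
    intro x
    have h := (hecd x).mul (hφd x)
    rw [hGdef, hgddef]
    exact h.congr_deriv (by beta_reduce; ring)
  -- G tends to 0 at infinity
  have htendG : Tendsto G atTop (nhds 0) := by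
    have hb : Tendsto (fun x : ℝ => (2 * M) ^ (p + 1) * Real.exp (-((2 / lam) * x)))
        atTop (nhds 0) := by
      have h1 : Tendsto (fun x : ℝ => Real.exp (-((2 / lam) * x))) atTop (nhds 0) := by
        apply Real.tendsto_exp_neg_atTop_nhds_zero.comp
        exact Tendsto.const_mul_atTop (by positivity) tendsto_id
      simpa using h1.const_mul ((2 * M) ^ (p + 1))
    apply squeeze_zero' (by filter_upwards with x; positivity)
      _ hb
    filter_upwards [eventually_ge_atTop (0:ℝ)] with x hx
    have h1 : φ x ≤ (2 * M) ^ (p + 1) * Real.exp (-(x / lam) * (p + 1)) := by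
      rw [hφrpow x]
      calc ‖v x‖ ^ (p + 1) ≤ (2 * M * Real.exp (-(x / lam))) ^ (p + 1) :=
            Real.rpow_le_rpow (norm_nonneg _) (hvexp x hx) (by positivity)
        _ = (2 * M) ^ (p + 1) * Real.exp (-(x / lam) * (p + 1)) := by
            rw [Real.mul_rpow (by positivity) (Real.exp_pos _).le, ← Real.exp_mul]
    have h2 : Real.exp (α * x) * Real.exp (-(x / lam) * (p + 1))
        = Real.exp (-((2 / lam) * x)) := by
      rw [← Real.exp_add]
      congr 1
      rw [hαdef]
      field_simp
      ring
    calc G x ≤ Real.exp (α * x) * ((2 * M) ^ (p + 1) * Real.exp (-(x / lam) * (p + 1))) :=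
          mul_le_mul_of_nonneg_left h1 (hepos x).le
      _ = (2 * M) ^ (p + 1) * (Real.exp (α * x) * Real.exp (-(x / lam) * (p + 1))) := by ring
      _ = (2 * M) ^ (p + 1) * Real.exp (-((2 / lam) * x)) := by rw [h2]
  have hG0 : G 0 = 0 := by
    have hq0 : q ≠ 0 := by intro h; rw [h] at hq1; linarith
    simp [hGdef, hφdef, hv0, Real.zero_rpow hq0]
  -- FTC on (0, ∞)
  have hgdint : IntegrableOn gd (Set.Ioi 0) := (hIφ.const_mul α).add hIφ'
  have hFTC : ∫ x in Set.Ioi (0:ℝ), gd x = 0 - G 0 :=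
    integral_Ioi_of_hasDerivAt_of_tendsto (hGd 0).continuousAt.continuousWithinAt
      (fun x _ => hGd x) hgdint htendG
  -- main integral quantities
  set I : ℝ := ∫ x in Set.Ioi (0:ℝ), Real.exp (α * x) * φ x with hIdef
  set Dp : ℝ := ∫ x in Set.Ioi (0:ℝ), ‖deriv v x‖ ^ 2 with hDpdef
  set D : ℝ := ∫ x, ‖deriv v x‖ ^ 2 with hDdef
  have hD0 : 0 ≤ D := integral_nonneg fun x => by positivity
  have hDple : Dp ≤ D :=
    setIntegral_le_integral hIvD (Eventually.of_forall fun x => by positivity)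
  have hInonneg : 0 ≤ I :=
    setIntegral_nonneg measurableSet_Ioi fun x _ => by positivity
  -- from FTC : α I + ∫ e φ' = 0
  have hsumI : α * I + (∫ x in Set.Ioi (0:ℝ), Real.exp (α * x) * φ' x) = 0 := by
    have e1 : ∫ x in Set.Ioi (0:ℝ), gd x
        = α * I + ∫ x in Set.Ioi (0:ℝ), Real.exp (α * x) * φ' x := by
      rw [hIdef, ← integral_const_mul α, ← integral_add (hIφ.const_mul α) hIφ']
    rw [← e1, hFTC, hG0, sub_zero]
  -- bound α I by the quadratic estimate
  set c2 : ℝ := (p + 1) ^ 2 / (2 * α) * (2 * M) ^ (p - 1) with hc2def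
  have hc2nonneg : 0 ≤ c2 := by
    apply mul_nonneg (by positivity)
    exact Real.rpow_nonneg (by positivity) _
  have hbint : IntegrableOn (fun x => α / 2 * G x + c2 * ‖deriv v x‖ ^ 2) (Set.Ioi 0) :=
    (hIφ.const_mul (α / 2)).add (hIvD.restrict.const_mul c2)
  have hptwise : ∀ x ∈ Set.Ioi (0:ℝ),
      ‖Real.exp (α * x) * φ' x‖ ≤ α / 2 * G x + c2 * ‖deriv v x‖ ^ 2 := by
    intro x hx
    have hx0 : (0:ℝ) ≤ x := le_of_lt hx
    have hq := quad_bound hp hα (norm_nonneg (v x)) (norm_nonneg (deriv v x))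
    have hGx : G x = Real.exp (α * x) * ‖v x‖ ^ (p + 1) := by
      simp only [hGdef]; rw [hφrpow x]
    calc ‖Real.exp (α * x) * φ' x‖
        = Real.exp (α * x) * |φ' x| := by
          rw [norm_mul, Real.norm_eq_abs, Real.norm_eq_abs, abs_of_pos (hepos x)]
      _ ≤ Real.exp (α * x) * ((p + 1) * (‖v x‖ ^ p * ‖deriv v x‖)) :=
          mul_le_mul_of_nonneg_left (hφ'le x) (hepos x).le
      _ ≤ Real.exp (α * x) * (α / 2 * ‖v x‖ ^ (p + 1)
            + (p + 1) ^ 2 / (2 * α) * (‖v x‖ ^ (p - 1) * ‖deriv v x‖ ^ 2)) :=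
          mul_le_mul_of_nonneg_left hq (hepos x).le
      _ = α / 2 * (Real.exp (α * x) * ‖v x‖ ^ (p + 1))
            + (p + 1) ^ 2 / (2 * α)
              * ((Real.exp (α * x) * ‖v x‖ ^ (p - 1)) * ‖deriv v x‖ ^ 2) := by ring
      _ ≤ α / 2 * (Real.exp (α * x) * ‖v x‖ ^ (p + 1))
            + (p + 1) ^ 2 / (2 * α) * ((2 * M) ^ (p - 1) * ‖deriv v x‖ ^ 2) := by
          apply add_le_add_right
          apply mul_le_mul_of_nonneg_left _ (by positivity)
          exact mul_le_mul_of_nonneg_right (hkey x hx0) (by positivity)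
      _ = α / 2 * G x + c2 * ‖deriv v x‖ ^ 2 := by rw [hGx, hc2def]; ring
  have hαI : α * I ≤ α / 2 * I + c2 * Dp := by
    have h1 : α * I = -(∫ x in Set.Ioi (0:ℝ), Real.exp (α * x) * φ' x) := by linarith
    have h2 : ‖∫ x in Set.Ioi (0:ℝ), Real.exp (α * x) * φ' x‖
        ≤ ∫ x in Set.Ioi (0:ℝ), (α / 2 * G x + c2 * ‖deriv v x‖ ^ 2) := by
      apply norm_integral_le_of_norm_le hbint
      rw [ae_restrict_iff' measurableSet_Ioi]
      filter_upwards with x hx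
      exact hptwise x hx
    have h3 : ∫ x in Set.Ioi (0:ℝ), (α / 2 * G x + c2 * ‖deriv v x‖ ^ 2)
        = α / 2 * I + c2 * Dp := by
      rw [integral_add (hIφ.const_mul (α / 2)) (hIvD.restrict.const_mul c2),
        integral_const_mul (α / 2), integral_const_mul c2]
    rw [h1]
    calc -(∫ x in Set.Ioi (0:ℝ), Real.exp (α * x) * φ' x)
        ≤ ‖∫ x in Set.Ioi (0:ℝ), Real.exp (α * x) * φ' x‖ := by
          rw [Real.norm_eq_abs]; exact neg_le_abs _
      _ ≤ α / 2 * I + c2 * Dp := by rw [← h3]; exact h2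
  have hIle : I ≤ 2 / α * (c2 * Dp) := by
    rw [div_mul_eq_mul_div, le_div_iff₀ hα]
    nlinarith
  have hDp0 : 0 ≤ Dp := setIntegral_nonneg measurableSet_Ioi fun x _ => by positivity
  -- the left-hand side integrand
  set F : ℝ → ℝ := fun x => (1 / Real.cosh (x / lam)) ^ 2 * ‖u x‖ ^ (p + 1) with hFdef
  have hFeq : ∀ x, F x = Real.cosh (x / lam) ^ (p - 1) * φ x := by
    intro x
    have hc : (0:ℝ) < Real.cosh (x / lam) := hcoshpos x
    have h1 : ‖u x‖ = Real.cosh (x / lam) * ‖v x‖ := by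
      rw [hnormv x]; field_simp
    simp only [hFdef]
    rw [h1, Real.mul_rpow hc.le (norm_nonneg _), hφrpow x]
    have h2 : Real.cosh (x / lam) ^ (p + 1)
        = Real.cosh (x / lam) ^ (p - 1) * Real.cosh (x / lam) ^ (2:ℕ) := by
      rw [← Real.rpow_natCast (Real.cosh (x / lam)) 2, ← Real.rpow_add hc]
      push_cast
      congr 1
      ring
    rw [h2]
    field_simp
  have hFnonneg : ∀ x, 0 ≤ F x := by
    intro x
    simp only [hFdef]
    have := Real.rpow_nonneg (norm_nonneg (u x)) (p + 1)
    positivity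
  have hFcont : Continuous F := by
    apply Continuous.mul
    · exact (continuous_const.div (Real.continuous_cosh.comp (continuous_id.div_const lam))
        fun x => (hcoshpos x).ne').pow 2
    · exact (hu.continuous.norm).rpow_const fun x => Or.inr (by positivity)
  have hIF : Integrable F := by
    apply Integrable.mono' (hIv2.const_mul (M ^ (p - 1))) hFcont.aestronglyMeasurable
    filter_upwards with x
    rw [Real.norm_eq_abs, abs_of_nonneg (hFnonneg x), hFeq x, hsplit x]
    calc Real.cosh (x / lam) ^ (p - 1) * (‖v x‖ ^ (p - 1) * ‖v x‖ ^ 2)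
        = (Real.cosh (x / lam) ^ (p - 1) * ‖v x‖ ^ (p - 1)) * ‖v x‖ ^ 2 := by ring
      _ ≤ M ^ (p - 1) * ‖v x‖ ^ 2 :=
          mul_le_mul_of_nonneg_right (hkey2 x) (by positivity)
  have hFeven : ∀ x, F (-x) = F x := by
    intro x
    simp only [hFdef]
    rw [neg_div, Real.cosh_neg, hodd x, norm_neg]
  have hIic : ∫ x in Set.Iic (0:ℝ), F x = ∫ x in Set.Ioi (0:ℝ), F x := by
    have h := integral_comp_neg_Ioi (0:ℝ) F
    rw [neg_zero] at h
    rw [← h]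
    exact setIntegral_congr_fun measurableSet_Ioi fun x _ => hFeven x
  have hIoile : ∫ x in Set.Ioi (0:ℝ), F x ≤ I := by
    rw [hIdef]
    apply setIntegral_mono_on hIF.integrableOn hIφ measurableSet_Ioi
    intro x hx
    have hx0 : (0:ℝ) ≤ x := le_of_lt hx
    rw [hFeq x]
    have hcle : Real.cosh (x / lam) ^ (p - 1) ≤ Real.exp (α * x) := by
      have h1 : Real.cosh (x / lam) ≤ Real.exp (x / lam) :=
        cosh_le_exp_of_nonneg (by positivity)
      have h2 : Real.cosh (x / lam) ^ (p - 1) ≤ (Real.exp (x / lam)) ^ (p - 1) :=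
        Real.rpow_le_rpow (hcoshpos x).le h1 hp0.le
      have h3 : (Real.exp (x / lam)) ^ (p - 1) = Real.exp (α * x) := by
        rw [← Real.exp_mul]
        congr 1
        rw [hαdef]
        field_simp
      rw [h3] at h2
      exact h2
    exact mul_le_mul_of_nonneg_right hcle (hφnonneg x)
  have hwhole : ∫ x, F x = (∫ x in Set.Iic (0:ℝ), F x) + ∫ x in Set.Ioi (0:ℝ), F x :=
    (intervalIntegral.integral_Iic_add_Ioi hIF.integrableOn hIF.integrableOn).symm
  -- final numeric bookkeeping
  have hX0 : (0:ℝ) ≤ (2:ℝ) ^ (p - 1) := (Real.rpow_pos_of_pos two_pos _).le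
  have hY0 : (0:ℝ) ≤ M ^ (p - 1) := Real.rpow_nonneg hM0 _
  have h2M : (2 * M) ^ (p - 1) = (2:ℝ) ^ (p - 1) * M ^ (p - 1) :=
    Real.mul_rpow (by norm_num) hM0
  have h2M0 : (0:ℝ) ≤ (2 * M) ^ (p - 1) := Real.rpow_nonneg (by positivity) _
  have hcoef : 2 * (2 / α * ((p + 1) ^ 2 / (2 * α))) ≤ 2 * (2 * (p + 1) * lam / (p - 1)) ^ 2 := by
    rw [hαdef]
    have h1 : 2 * (2 / ((p - 1) / lam) * ((p + 1) ^ 2 / (2 * ((p - 1) / lam))))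
        = 2 * ((p + 1) * lam / (p - 1)) ^ 2 := by
      field_simp
    have h2 : 2 * (2 * (p + 1) * lam / (p - 1)) ^ 2 = 8 * ((p + 1) * lam / (p - 1)) ^ 2 := by
      ring
    rw [h1, h2]
    nlinarith [sq_nonneg ((p + 1) * lam / (p - 1))]
  have hfinal : 2 * (2 / α * (c2 * Dp))
      ≤ 2 * (2 * (p + 1) * lam / (p - 1)) ^ 2 * 2 ^ (p - 1) * M ^ (p - 1) * D := by
    calc 2 * (2 / α * (c2 * Dp))
        = (2 * (2 / α * ((p + 1) ^ 2 / (2 * α)))) * ((2 * M) ^ (p - 1) * Dp) := by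
          rw [hc2def]; ring
      _ ≤ (2 * (2 * (p + 1) * lam / (p - 1)) ^ 2) * ((2 * M) ^ (p - 1) * Dp) :=
          mul_le_mul_of_nonneg_right hcoef (mul_nonneg h2M0 hDp0)
      _ = (2 * (2 * (p + 1) * lam / (p - 1)) ^ 2) * ((2:ℝ) ^ (p - 1) * M ^ (p - 1) * Dp) := by
          rw [h2M]
      _ ≤ (2 * (2 * (p + 1) * lam / (p - 1)) ^ 2) * ((2:ℝ) ^ (p - 1) * M ^ (p - 1) * D) := by
          apply mul_le_mul_of_nonneg_left _ (by positivity)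
          exact mul_le_mul_of_nonneg_left hDple (mul_nonneg hX0 hY0)
      _ = 2 * (2 * (p + 1) * lam / (p - 1)) ^ 2 * 2 ^ (p - 1) * M ^ (p - 1) * D := by ring
  calc ∫ x, F x
      = (∫ x in Set.Iic (0:ℝ), F x) + ∫ x in Set.Ioi (0:ℝ), F x := hwhole
    _ = 2 * ∫ x in Set.Ioi (0:ℝ), F x := by rw [hIic]; ring
    _ ≤ 2 * I := by linarith
    _ ≤ 2 * (2 / α * (c2 * Dp)) := by linarith
    _ ≤ 2 * (2 * (p + 1) * lam / (p - 1)) ^ 2 * 2 ^ (p - 1) * M ^ (p - 1) * D := hfinal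
end

section
/- Let V : ℝ → ℝ be a nonzero even Schwartz function with ∫_ℝ (|V(x)| + |V'(x)|)·cosh(2x) dx < ∞, fix λ > 1, and set φ(x) = λ·tanh(x/λ) (so φ'(x) = sech²(x/λ)). Then there exists μ₀ > 0 such that for every μ ∈ (0, μ₀) and every continuously differentiable odd v : ℝ → ℝ with v, v' square-integrable, 2∫_ℝ v'(x)² dx - (1/λ²)∫_ℝ sech²(x/λ) v(x)² dx - μ∫_ℝ V'(x)·(φ(x)/φ'(x))·v(x)² dx ≥ (1/2)∫_ℝ v'(x)² dx. -/
open MeasureTheory Real Filter Set Topology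

section CoercivityAux

lemma coerc_aux_hasDerivAt_tanh (x : ℝ) : HasDerivAt Real.tanh ((1 / Real.cosh x) ^ 2) x := by
  have h := (Real.hasDerivAt_sinh x).div (Real.hasDerivAt_cosh x) (Real.cosh_pos x).ne'
  have : (fun y => Real.sinh y / Real.cosh y) = Real.tanh := by
    funext y; rw [Real.tanh_eq_sinh_div_cosh]
  rw [show (Real.sinh / Real.cosh) = Real.tanh from this] at h
  refine h.congr_deriv ?_
  have hc := Real.cosh_sq_sub_sinh_sq x
  have hcx := (Real.cosh_pos x).ne'
  field_simp
  nlinarith [Real.cosh_pos x]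

lemma coerc_aux_abs_tanh_le_one (x : ℝ) : |Real.tanh x| ≤ 1 := by
  rw [Real.tanh_eq_sinh_div_cosh, abs_div, abs_of_pos (Real.cosh_pos x),
    div_le_one (Real.cosh_pos x)]
  nlinarith [Real.cosh_sq_sub_sinh_sq x, sq_abs (Real.sinh x), Real.cosh_pos x,
    abs_nonneg (Real.sinh x)]

lemma coerc_aux_cosh_le_exp_abs (x : ℝ) : Real.cosh x ≤ Real.exp |x| := by
  rw [Real.cosh_eq]
  have h1 : Real.exp x ≤ Real.exp |x| := Real.exp_le_exp.mpr (le_abs_self x)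
  have h2 : Real.exp (-x) ≤ Real.exp |x| := Real.exp_le_exp.mpr (neg_le_abs x)
  linarith

lemma coerc_aux_exp_abs_le_two_cosh (x : ℝ) : Real.exp |x| ≤ 2 * Real.cosh x := by
  rw [Real.cosh_eq]
  rcases abs_cases x with ⟨h, _⟩ | ⟨h, _⟩ <;> rw [h] <;>
    nlinarith [Real.exp_pos x, Real.exp_pos (-x)]

lemma coerc_aux_G_hasDerivAt (lam : ℝ) (hlam : 0 < lam) (x : ℝ) :
    HasDerivAt (fun y : ℝ => lam * y * Real.tanh (y / lam) - lam ^ 2 * Real.log (Real.cosh (y / lam)))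
      (x * (1 / Real.cosh (x / lam)) ^ 2) x := by
  have hd : HasDerivAt (fun y : ℝ => y / lam) (1 / lam) x := by
    simpa using (hasDerivAt_id x).div_const lam
  have ht : HasDerivAt (fun y : ℝ => Real.tanh (y / lam))
      ((1 / Real.cosh (x / lam)) ^ 2 * (1 / lam)) x :=
    by have := (coerc_aux_hasDerivAt_tanh (x / lam)).comp x hd; exact this
  have h1 : HasDerivAt (fun y : ℝ => lam * y * Real.tanh (y / lam))
      (lam * Real.tanh (x / lam) + lam * x * ((1 / Real.cosh (x / lam)) ^ 2 * (1 / lam))) x := by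
    have := ((hasDerivAt_id x).const_mul lam).mul ht
    refine this.congr_deriv ?_; simp only [id_eq]; ring
  have hc : HasDerivAt (fun y : ℝ => Real.log (Real.cosh (y / lam)))
      (Real.sinh (x / lam) * (1 / lam) / Real.cosh (x / lam)) x := by
    have hcosh : HasDerivAt (fun y : ℝ => Real.cosh (y / lam)) (Real.sinh (x / lam) * (1 / lam)) x :=
      by have := (Real.hasDerivAt_cosh (x / lam)).comp x hd; exact this
    exact hcosh.log (Real.cosh_pos _).ne'
  have := h1.sub (hc.const_mul (lam ^ 2))
  refine this.congr_deriv ?_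
  have hcp := (Real.cosh_pos (x / lam)).ne'
  rw [Real.tanh_eq_sinh_div_cosh]
  field_simp
  ring

lemma coerc_aux_G_tendsto (lam : ℝ) (hlam : 0 < lam) :
    Tendsto (fun y : ℝ => lam * y * Real.tanh (y / lam) - lam ^ 2 * Real.log (Real.cosh (y / lam)))
      atTop (𝓝 (lam ^ 2 * Real.log 2)) := by
  have hident : ∀ x : ℝ,
      lam * x * Real.tanh (x / lam) - lam ^ 2 * Real.log (Real.cosh (x / lam))
      = -2 * lam * (x * Real.exp (-2 * x / lam)) / (1 + Real.exp (-2 * x / lam))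
        + lam ^ 2 * Real.log 2 - lam ^ 2 * Real.log (1 + Real.exp (-2 * x / lam)) := by
    intro x
    set E := Real.exp (x / lam) with hE
    have hEpos : 0 < E := Real.exp_pos _
    have ht : Real.exp (-2 * x / lam) = E⁻¹ ^ 2 := by
      rw [← Real.exp_neg, ← Real.exp_nat_mul]
      congr 1; ring
    have htanh : Real.tanh (x / lam) = (E - E⁻¹) / (E + E⁻¹) := by
      rw [Real.tanh_eq_sinh_div_cosh, Real.sinh_eq, Real.cosh_eq, ← hE, ← Real.exp_neg]
      rw [show Real.exp (-(x/lam)) = E⁻¹ by rw [Real.exp_neg]]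
      field_simp
    have hcosh : Real.cosh (x / lam) = E * (1 + E⁻¹ ^ 2) / 2 := by
      rw [Real.cosh_eq, ← hE, ← Real.exp_neg,
        show Real.exp (-(x/lam)) = E⁻¹ by rw [Real.exp_neg]]
      field_simp
    have hlog : Real.log (Real.cosh (x / lam)) = x / lam + Real.log (1 + E⁻¹ ^ 2) - Real.log 2 := by
      rw [hcosh, Real.log_div (by positivity) (by norm_num), Real.log_mul hEpos.ne' (by positivity),
        hE, Real.log_exp]
    rw [ht, htanh, hlog]
    have h1 : (0:ℝ) < E + E⁻¹ := by positivity
    field_simp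
    ring
  rw [show (lam ^ 2 * Real.log 2)
      = -2 * lam * 0 / (1 + 0) + lam ^ 2 * Real.log 2 - lam ^ 2 * Real.log (1 + 0) by simp]
  refine Tendsto.congr (fun x => (hident x).symm) ?_
  have hlin : Tendsto (fun x : ℝ => 2 * x / lam) atTop atTop := by
    apply Tendsto.atTop_div_const hlam
    exact tendsto_id.const_mul_atTop (by norm_num)
  have hexp : Tendsto (fun x : ℝ => Real.exp (-2 * x / lam)) atTop (𝓝 0) := by
    have : Tendsto (fun x : ℝ => -(2 * x / lam)) atTop atBot := tendsto_neg_atBot_iff.mpr hlin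
    have := Real.tendsto_exp_atBot.comp this
    refine this.congr fun x => by rw [Function.comp]; congr 1; ring
  have hxexp : Tendsto (fun x : ℝ => x * Real.exp (-2 * x / lam)) atTop (𝓝 0) := by
    have base : Tendsto (fun t : ℝ => t * Real.exp (-t)) atTop (𝓝 0) := by
      simpa using Real.tendsto_pow_mul_exp_neg_atTop_nhds_zero 1
    have comp := (base.comp hlin).const_mul (lam / 2)
    rw [mul_zero] at comp
    refine comp.congr fun x => ?_
    simp only [Function.comp]
    rw [show -(2 * x / lam) = -2 * x / lam by ring]
    field_simp
  have hden : Tendsto (fun x : ℝ => 1 + Real.exp (-2 * x / lam)) atTop (𝓝 (1 + 0)) :=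
    tendsto_const_nhds.add hexp
  have hlog1 : Tendsto (fun x : ℝ => Real.log (1 + Real.exp (-2 * x / lam))) atTop (𝓝 (Real.log (1+0))) :=
    hden.log (by norm_num)
  exact (((hxexp.const_mul (-2 * lam)).div hden (by norm_num)).add_const
    (lam ^ 2 * Real.log 2)).sub (hlog1.const_mul (lam ^ 2))

lemma coerc_aux_weight_integrableOn (lam : ℝ) (hlam : 0 < lam) :
    IntegrableOn (fun x : ℝ => x * (1 / Real.cosh (x / lam)) ^ 2) (Ioi (0:ℝ)) :=
  integrableOn_Ioi_deriv_of_nonneg' (fun x _ => coerc_aux_G_hasDerivAt lam hlam x)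
    (fun x hx => mul_nonneg (le_of_lt hx) (by positivity)) (coerc_aux_G_tendsto lam hlam)

lemma coerc_aux_weight_integral (lam : ℝ) (hlam : 0 < lam) :
    ∫ x in Ioi (0:ℝ), x * (1 / Real.cosh (x / lam)) ^ 2 = lam ^ 2 * Real.log 2 := by
  have := integral_Ioi_of_hasDerivAt_of_nonneg' (fun x _ => coerc_aux_G_hasDerivAt lam hlam x)
    (fun x hx => mul_nonneg (le_of_lt hx) (by positivity)) (coerc_aux_G_tendsto lam hlam)
  simpa using this


lemma coerc_aux_pointwise_sq_le (v : ℝ → ℝ) (hv : ContDiff ℝ 1 v) (hodd : ∀ x, v (-x) = -v x)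
    (hint : Integrable (fun x : ℝ => (deriv v x) ^ 2)) (x : ℝ) :
    (v x) ^ 2 ≤ |x| * ∫ y : ℝ, (deriv v y) ^ 2 := by
  set A := ∫ y : ℝ, (deriv v y) ^ 2 with hA
  have hA0 : 0 ≤ A := integral_nonneg fun y => sq_nonneg _
  have hv0 : v 0 = 0 := by have := hodd 0; simp at this; linarith
  have hdiff : Differentiable ℝ v := hv.differentiable one_ne_zero
  have hcd : Continuous (deriv v) := hv.continuous_deriv le_rfl
  have key : ∀ x : ℝ, 0 ≤ x → (v x) ^ 2 ≤ x * A := by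
    intro x hx
    have hftc : ∫ t in (0:ℝ)..x, deriv v t = v x - v 0 :=
      intervalIntegral.integral_deriv_eq_sub (fun t _ => hdiff t) (hcd.intervalIntegrable 0 x)
    set L := ∫ t in (0:ℝ)..x, |deriv v t| with hLdef
    set S := ∫ t in (0:ℝ)..x, (deriv v t) ^ 2 with hSdef
    have habs : |v x| ≤ L := by
      rw [show v x = ∫ t in (0:ℝ)..x, deriv v t by rw [hftc, hv0, sub_zero]]
      exact intervalIntegral.abs_integral_le_integral_abs hx
    have hL0 : 0 ≤ L := intervalIntegral.integral_nonneg hx fun t _ => abs_nonneg _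
    have hS0 : 0 ≤ S := intervalIntegral.integral_nonneg hx fun t _ => sq_nonneg _
    have hSA : S ≤ A := by
      rw [hSdef, intervalIntegral.integral_of_le hx]
      exact setIntegral_le_integral hint (ae_of_all _ fun t => sq_nonneg _)
    have hLS : L ^ 2 ≤ x * S := by
      rcases eq_or_lt_of_le hx with h0 | hxpos
      · have : L = 0 := by rw [hLdef, ← h0, intervalIntegral.integral_same]
        rw [this]; nlinarith
      rcases eq_or_lt_of_le hL0 with hL | hLpos
      · nlinarith
      have hc : 0 < L / x := div_pos hLpos hxpos
      have hptw : ∀ t ∈ Icc (0:ℝ) x, |deriv v t| ≤ (deriv v t) ^ 2 / (2 * (L / x)) + (L / x) / 2 := by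
        intro t _
        rw [div_add_div _ _ (by positivity) (by norm_num), le_div_iff₀ (by positivity)]
        nlinarith [sq_nonneg (|deriv v t| - L / x), sq_abs (deriv v t)]
      have hmono : L ≤ ∫ t in (0:ℝ)..x, ((deriv v t) ^ 2 / (2 * (L / x)) + (L / x) / 2) := by
        refine intervalIntegral.integral_mono_on hx (hcd.abs.intervalIntegrable 0 x) ?_ hptw
        exact (((hcd.pow 2).div_const _).add continuous_const).intervalIntegrable 0 x
      have hval : (∫ t in (0:ℝ)..x, ((deriv v t) ^ 2 / (2 * (L / x)) + (L / x) / 2))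
          = S / (2 * (L / x)) + (L / x) / 2 * x := by
        rw [intervalIntegral.integral_add (f := fun t => deriv v t ^ 2 / (2 * (L / x)))
          (((hcd.pow 2).div_const _).intervalIntegrable 0 x)
          (intervalIntegrable_const), intervalIntegral.integral_div,
          intervalIntegral.integral_const]
        simp [smul_eq_mul]; ring
      rw [hval] at hmono
      have e1 : L / x / 2 * x = L / 2 := by field_simp
      have e2 : S / (2 * (L / x)) = S * x / (2 * L) := by
        rw [div_eq_div_iff (by positivity) (by positivity)]; field_simp
      rw [e1, e2] at hmono
      have h3 : L / 2 ≤ S * x / (2 * L) := by linarith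
      have h4 := (div_le_div_iff₀ (show (0:ℝ) < 2 by norm_num)
        (show (0:ℝ) < 2 * L by positivity)).mp h3
      nlinarith [h4]
    calc (v x) ^ 2 = |v x| ^ 2 := by rw [sq_abs]
      _ ≤ L ^ 2 := by nlinarith [abs_nonneg (v x)]
      _ ≤ x * S := hLS
      _ ≤ x * A := by nlinarith
  rcases le_total 0 x with hx | hx
  · rw [abs_of_nonneg hx]; exact key x hx
  · have h1 : v x = -v (-x) := by have := hodd (-x); rw [neg_neg] at this; linarith
    have : (v x) ^ 2 = (v (-x)) ^ 2 := by rw [h1]; ring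
    rw [this, abs_of_nonpos hx]
    exact key (-x) (by linarith)


lemma coerc_aux_integrable_comp_abs {f : ℝ → ℝ}
    (hf : IntegrableOn (fun x => f |x|) (Ioi (0:ℝ))) :
    Integrable (fun x : ℝ => f |x|) := by
  have int_Iic : IntegrableOn (fun x ↦ f |x|) (Iic 0) := by
    rw [← Measure.map_neg_eq_self (volume : Measure ℝ)]
    let m : MeasurableEmbedding fun x : ℝ => -x := (Homeomorph.neg ℝ).measurableEmbedding
    rw [m.integrableOn_map_iff]
    simp_rw [Function.comp_def, abs_neg, neg_preimage, neg_Iic, neg_zero]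
    exact (integrableOn_Ici_iff_integrableOn_Ioi).mpr hf
  rw [← integrableOn_univ, ← Iic_union_Ioi (a := (0:ℝ))]
  exact int_Iic.union hf

lemma coerc_aux_weight_eq (lam : ℝ) (hlam : 0 < lam) (x : ℝ) :
    |x| * (1 / Real.cosh (|x| / lam)) ^ 2 = |x| * (1 / Real.cosh (x / lam)) ^ 2 := by
  rw [show |x| / lam = |x / lam| by rw [abs_div, abs_of_pos hlam], Real.cosh_abs]

lemma coerc_aux_weight_integrable (lam : ℝ) (hlam : 0 < lam) :
    Integrable (fun x : ℝ => |x| * (1 / Real.cosh (x / lam)) ^ 2) := by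
  have h : (fun x : ℝ => |x| * (1 / Real.cosh (x / lam)) ^ 2)
      = fun x : ℝ => (fun t : ℝ => t * (1 / Real.cosh (t / lam)) ^ 2) |x| := by
    funext x; exact (coerc_aux_weight_eq lam hlam x).symm
  rw [h]
  refine coerc_aux_integrable_comp_abs (f := fun t : ℝ => t * (1 / Real.cosh (t / lam)) ^ 2) ?_
  apply (coerc_aux_weight_integrableOn lam hlam).congr_fun _ measurableSet_Ioi
  intro x hx
  simp only
  rw [abs_of_pos (mem_Ioi.mp hx)]

lemma coerc_aux_weight_integral_real (lam : ℝ) (hlam : 0 < lam) :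
    ∫ x : ℝ, |x| * (1 / Real.cosh (x / lam)) ^ 2 = 2 * (lam ^ 2 * Real.log 2) := by
  have h : (fun x : ℝ => |x| * (1 / Real.cosh (x / lam)) ^ 2)
      = fun x : ℝ => (fun t : ℝ => t * (1 / Real.cosh (t / lam)) ^ 2) |x| := by
    funext x; exact (coerc_aux_weight_eq lam hlam x).symm
  rw [h, integral_comp_abs (f := fun t : ℝ => t * (1 / Real.cosh (t / lam)) ^ 2),
    coerc_aux_weight_integral lam hlam]

end CoercivityAux


set_option maxHeartbeats 1000000 in
/-- Proposition 3.2: coercivity of the modified quadratic form on odd functions,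
for small coupling μ. -/
theorem coercivity_modified_bilinear_form_odd
    (V : SchwartzMap ℝ ℝ) (hV0 : (V : ℝ → ℝ) ≠ 0)
    (hVeven : ∀ x : ℝ, V (-x) = V x)
    (hVint : Integrable (fun x : ℝ => (|V x| + |deriv (V : ℝ → ℝ) x|) * Real.cosh (2 * x)))
    (lam : ℝ) (hlam : 1 < lam) :
    ∃ μ₀ > 0, ∀ μ : ℝ, μ ∈ Set.Ioo 0 μ₀ →
      ∀ v : ℝ → ℝ, ContDiff ℝ 1 v →
        (∀ x : ℝ, v (-x) = - v x) →
        Integrable (fun x : ℝ => (v x) ^ 2) →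
        Integrable (fun x : ℝ => (deriv v x) ^ 2) →
        2 * (∫ x : ℝ, (deriv v x) ^ 2)
          - (1 / lam ^ 2) * (∫ x : ℝ, (1 / Real.cosh (x / lam)) ^ 2 * (v x) ^ 2)
          - μ * (∫ x : ℝ, deriv (V : ℝ → ℝ) x
              * (lam * Real.tanh (x / lam) / (1 / Real.cosh (x / lam)) ^ 2) * (v x) ^ 2)
        ≥ (1 / 2) * ∫ x : ℝ, (deriv v x) ^ 2 := by
  have hlam0 : (0:ℝ) < lam := by linarith
  have hδ : (0:ℝ) < 2 - 2 / lam := by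
    have : 2 / lam < 2 := by rw [div_lt_iff₀ hlam0]; nlinarith
    linarith
  set K : ℝ := 2 * lam / (2 - 2 / lam) with hKdef
  have hK : 0 < K := by positivity
  set I : ℝ := ∫ x : ℝ, (|V x| + |deriv (V : ℝ → ℝ) x|) * Real.cosh (2 * x) with hIdef
  have hI0 : 0 ≤ I := integral_nonneg fun x => mul_nonneg (by positivity) (Real.cosh_pos _).le
  have hnum : (0:ℝ) < 3 / 2 - 2 * Real.log 2 := by
    have h := Real.log_two_lt_d9
    norm_num at h ⊢
    linarith
  have hV'cont : Continuous (deriv (V : ℝ → ℝ)) := (V.smooth ⊤).continuous_deriv (by exact_mod_cast le_top)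
  refine ⟨(3 / 2 - 2 * Real.log 2) / (K * I + 1), by positivity, ?_⟩
  intro μ hμ v hv hodd hv2 hdv2
  obtain ⟨hμ0, hμlt⟩ := hμ
  set A : ℝ := ∫ x : ℝ, (deriv v x) ^ 2 with hA
  have hA0 : 0 ≤ A := integral_nonneg fun x => sq_nonneg _
  have hvptw : ∀ x : ℝ, (v x) ^ 2 ≤ |x| * A := coerc_aux_pointwise_sq_le v hv hodd hdv2
  have hvcont : Continuous v := hv.continuous
  have hcoshcont : Continuous fun x : ℝ => Real.cosh (x / lam) :=
    Real.continuous_cosh.comp (continuous_id.div_const lam)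
  have hsechcont : Continuous fun x : ℝ => (1 / Real.cosh (x / lam)) ^ 2 :=
    ((continuous_const.div hcoshcont fun x => (Real.cosh_pos _).ne').pow 2)
  -- bound on the sech² term
  have hBrhsint : Integrable fun x : ℝ => |x| * (1 / Real.cosh (x / lam)) ^ 2 * A :=
    (coerc_aux_weight_integrable lam hlam0).mul_const A
  have hBint : Integrable fun x : ℝ => (1 / Real.cosh (x / lam)) ^ 2 * (v x) ^ 2 := by
    refine hv2.mono (hsechcont.mul (hvcont.pow 2)).aestronglyMeasurable
      (ae_of_all _ fun x => ?_)
    have h1 : (1:ℝ) ≤ Real.cosh (x / lam) := Real.one_le_cosh _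
    have h2 : (1 / Real.cosh (x / lam)) ^ 2 ≤ 1 := by
      rw [div_pow, one_pow, div_le_one (by positivity)]
      nlinarith
    rw [Real.norm_eq_abs, Real.norm_eq_abs, abs_of_nonneg (by positivity :
      (0:ℝ) ≤ (1 / Real.cosh (x / lam)) ^ 2 * (v x) ^ 2), abs_of_nonneg (sq_nonneg (v x))]
    nlinarith [sq_nonneg (v x)]
  have hB : (∫ x : ℝ, (1 / Real.cosh (x / lam)) ^ 2 * (v x) ^ 2)
      ≤ 2 * (lam ^ 2 * Real.log 2) * A := by
    calc (∫ x : ℝ, (1 / Real.cosh (x / lam)) ^ 2 * (v x) ^ 2)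
        ≤ ∫ x : ℝ, |x| * (1 / Real.cosh (x / lam)) ^ 2 * A := by
          refine integral_mono hBint hBrhsint fun x => ?_
          have h1 : (0:ℝ) ≤ (1 / Real.cosh (x / lam)) ^ 2 := by positivity
          calc (1 / Real.cosh (x / lam)) ^ 2 * (v x) ^ 2
              ≤ (1 / Real.cosh (x / lam)) ^ 2 * (|x| * A) :=
                mul_le_mul_of_nonneg_left (hvptw x) h1
            _ = |x| * (1 / Real.cosh (x / lam)) ^ 2 * A := by ring
      _ = (∫ x : ℝ, |x| * (1 / Real.cosh (x / lam)) ^ 2) * A := by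
          rw [← integral_mul_const]
      _ = 2 * (lam ^ 2 * Real.log 2) * A := by
          rw [coerc_aux_weight_integral_real lam hlam0]
  -- bound on the potential term
  have hCptw : ∀ x : ℝ, |deriv (V : ℝ → ℝ) x
      * (lam * Real.tanh (x / lam) / (1 / Real.cosh (x / lam)) ^ 2) * (v x) ^ 2|
      ≤ K * A * ((|V x| + |deriv (V : ℝ → ℝ) x|) * Real.cosh (2 * x)) := by
    intro x
    have hc : 0 < Real.cosh (x / lam) := Real.cosh_pos _
    have e1 : deriv (V : ℝ → ℝ) x
        * (lam * Real.tanh (x / lam) / (1 / Real.cosh (x / lam)) ^ 2) * (v x) ^ 2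
        = deriv (V : ℝ → ℝ) x
          * (lam * Real.tanh (x / lam) * Real.cosh (x / lam) ^ 2) * (v x) ^ 2 := by
      field_simp
    rw [e1, abs_mul, abs_mul]
    have h2 : |lam * Real.tanh (x / lam) * Real.cosh (x / lam) ^ 2|
        ≤ lam * Real.cosh (2 * (x / lam)) := by
      rw [abs_mul, abs_mul, abs_of_pos hlam0, abs_of_nonneg (by positivity :
        (0:ℝ) ≤ Real.cosh (x / lam) ^ 2)]
      have ht := coerc_aux_abs_tanh_le_one (x / lam)
      have hcs : Real.cosh (x / lam) ^ 2 ≤ Real.cosh (2 * (x / lam)) := by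
        rw [Real.cosh_two_mul]; nlinarith [sq_nonneg (Real.sinh (x / lam))]
      calc lam * |Real.tanh (x / lam)| * Real.cosh (x / lam) ^ 2
          = lam * (|Real.tanh (x / lam)| * Real.cosh (x / lam) ^ 2) := by ring
        _ ≤ lam * (1 * Real.cosh (x / lam) ^ 2) :=
            mul_le_mul_of_nonneg_left (mul_le_mul_of_nonneg_right ht (sq_nonneg _)) hlam0.le
        _ = lam * Real.cosh (x / lam) ^ 2 := by ring
        _ ≤ lam * Real.cosh (2 * (x / lam)) := mul_le_mul_of_nonneg_left hcs hlam0.le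
    have h3 : |(v x) ^ 2| ≤ |x| * A := by
      rw [abs_of_nonneg (sq_nonneg _)]; exact hvptw x
    have h4 : lam * Real.cosh (2 * (x / lam)) * |x| ≤ K * Real.cosh (2 * x) := by
      have ha : Real.cosh (2 * (x / lam)) ≤ Real.exp (2 * |x| / lam) := by
        have := coerc_aux_cosh_le_exp_abs (2 * (x / lam))
        rwa [show |2 * (x / lam)| = 2 * |x| / lam by
          rw [abs_mul, abs_div, abs_of_pos hlam0]; norm_num; ring] at this
      have hb : |x| ≤ Real.exp ((2 - 2 / lam) * |x|) / (2 - 2 / lam) := by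
        rw [le_div_iff₀ hδ]
        have := Real.add_one_le_exp ((2 - 2 / lam) * |x|)
        nlinarith [abs_nonneg x]
      calc lam * Real.cosh (2 * (x / lam)) * |x|
          ≤ lam * Real.exp (2 * |x| / lam) * (Real.exp ((2 - 2 / lam) * |x|) / (2 - 2 / lam)) := by
            have hcc : 0 < Real.cosh (2 * (x / lam)) := Real.cosh_pos _
            have := mul_le_mul (mul_le_mul_of_nonneg_left ha hlam0.le) hb (abs_nonneg x)
              (by positivity)
            exact this
        _ = (lam / (2 - 2 / lam)) * Real.exp (2 * |x| / lam + (2 - 2 / lam) * |x|) := by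
            rw [Real.exp_add]; ring
        _ = (lam / (2 - 2 / lam)) * Real.exp (2 * |x|) := by
            congr 1
            congr 1
            field_simp
            ring
        _ = (lam / (2 - 2 / lam)) * Real.exp |2 * x| := by
            rw [abs_mul]; norm_num
        _ ≤ (lam / (2 - 2 / lam)) * (2 * Real.cosh (2 * x)) :=
            mul_le_mul_of_nonneg_left (coerc_aux_exp_abs_le_two_cosh (2 * x)) (by positivity)
        _ = K * Real.cosh (2 * x) := by rw [hKdef]; ring
    calc |deriv (V : ℝ → ℝ) x| * |lam * Real.tanh (x / lam) * Real.cosh (x / lam) ^ 2|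
          * |(v x) ^ 2|
        ≤ |deriv (V : ℝ → ℝ) x| * (lam * Real.cosh (2 * (x / lam))) * (|x| * A) := by
          refine mul_le_mul (mul_le_mul_of_nonneg_left h2 (abs_nonneg _)) h3 (abs_nonneg _) ?_
          positivity
      _ = (lam * Real.cosh (2 * (x / lam)) * |x|) * (|deriv (V : ℝ → ℝ) x| * A) := by ring
      _ ≤ (K * Real.cosh (2 * x)) * (|deriv (V : ℝ → ℝ) x| * A) :=
          mul_le_mul_of_nonneg_right h4 (by positivity)
      _ ≤ K * A * ((|V x| + |deriv (V : ℝ → ℝ) x|) * Real.cosh (2 * x)) := by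
          nlinarith [mul_nonneg (mul_nonneg (mul_nonneg hK.le hA0)
            (Real.cosh_pos (2 * x)).le) (abs_nonneg (V x))]
  have hCcont : Continuous fun x : ℝ => deriv (V : ℝ → ℝ) x
      * (lam * Real.tanh (x / lam) / (1 / Real.cosh (x / lam)) ^ 2) * (v x) ^ 2 := by
    have htanh : Continuous fun x : ℝ => Real.tanh (x / lam) := by
      have : Continuous Real.tanh := by
        have : Real.tanh = fun x => Real.sinh x / Real.cosh x := by
          funext y; rw [Real.tanh_eq_sinh_div_cosh]
        rw [this]
        exact Real.continuous_sinh.div Real.continuous_cosh fun x => (Real.cosh_pos x).ne'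
      exact this.comp (continuous_id.div_const lam)
    refine (hV'cont.mul (((continuous_const.mul htanh).div hsechcont
      fun x => by positivity))).mul (hvcont.pow 2)
  have hCint : Integrable fun x : ℝ => deriv (V : ℝ → ℝ) x
      * (lam * Real.tanh (x / lam) / (1 / Real.cosh (x / lam)) ^ 2) * (v x) ^ 2 := by
    refine Integrable.mono' (hVint.const_mul (K * A)) hCcont.aestronglyMeasurable
      (ae_of_all _ fun x => ?_)
    rw [Real.norm_eq_abs]
    exact hCptw x
  have hCabs : |∫ x : ℝ, deriv (V : ℝ → ℝ) x
      * (lam * Real.tanh (x / lam) / (1 / Real.cosh (x / lam)) ^ 2) * (v x) ^ 2| ≤ K * A * I := by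
    calc |∫ x : ℝ, deriv (V : ℝ → ℝ) x
        * (lam * Real.tanh (x / lam) / (1 / Real.cosh (x / lam)) ^ 2) * (v x) ^ 2|
        ≤ ∫ x : ℝ, |deriv (V : ℝ → ℝ) x
          * (lam * Real.tanh (x / lam) / (1 / Real.cosh (x / lam)) ^ 2) * (v x) ^ 2| := by
          have hni := norm_integral_le_integral_norm (μ := (volume : Measure ℝ))
            (f := fun x : ℝ => deriv (V : ℝ → ℝ) x
              * (lam * Real.tanh (x / lam) / (1 / Real.cosh (x / lam)) ^ 2) * (v x) ^ 2)
          simp only [Real.norm_eq_abs] at hni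
          exact hni
      _ ≤ ∫ x : ℝ, K * A * ((|V x| + |deriv (V : ℝ → ℝ) x|) * Real.cosh (2 * x)) :=
          integral_mono hCint.abs (hVint.const_mul (K * A)) hCptw
      _ = K * A * I := by rw [integral_const_mul]
  -- final assembly
  set B : ℝ := ∫ x : ℝ, (1 / Real.cosh (x / lam)) ^ 2 * (v x) ^ 2 with hBdef
  set C : ℝ := ∫ x : ℝ, deriv (V : ℝ → ℝ) x
      * (lam * Real.tanh (x / lam) / (1 / Real.cosh (x / lam)) ^ 2) * (v x) ^ 2 with hCdef
  have hBterm : (1 / lam ^ 2) * B ≤ 2 * Real.log 2 * A := by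
    have h := mul_le_mul_of_nonneg_left hB (by positivity : (0:ℝ) ≤ 1 / lam ^ 2)
    calc (1 / lam ^ 2) * B ≤ (1 / lam ^ 2) * (2 * (lam ^ 2 * Real.log 2) * A) := h
      _ = 2 * Real.log 2 * A := by field_simp
  have hCterm : μ * C ≤ (3 / 2 - 2 * Real.log 2) * A := by
    have h1 : μ * C ≤ μ * (K * A * I) :=
      mul_le_mul_of_nonneg_left ((le_abs_self C).trans hCabs) hμ0.le
    have h2 : μ * (K * A * I) ≤ (3 / 2 - 2 * Real.log 2) / (K * I + 1) * (K * A * I) :=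
      mul_le_mul_of_nonneg_right hμlt.le (by positivity)
    have h3 : (3 / 2 - 2 * Real.log 2) / (K * I + 1) * (K * A * I)
        ≤ (3 / 2 - 2 * Real.log 2) * A := by
      rw [div_mul_eq_mul_div, div_le_iff₀ (by positivity : (0:ℝ) < K * I + 1)]
      nlinarith [mul_nonneg hK.le hI0, mul_nonneg hnum.le hA0,
        mul_nonneg (mul_nonneg hnum.le hA0) (mul_nonneg hK.le hI0)]
    linarith
  linarith
end
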